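/- For every n ≥ 2, the number of spanning rooted forests of the path graph P_n in which both endpoint vertices 1 and n are roots equals F(2(n−1)). -/

import Mathlib

/-- A spanning rooted forest of a graph `G`: a spanning acyclic subgraph (given by its
edge set) together with a set of roots containing exactly one root in each tree
(connected component). -/
structure RootedForest {V : Type*} (G : SimpleGraph V) where
  edges : Set (Sym2 V)
  roots : Set V
  edges_sub : edges ⊆ G.edgeSet
  acyclic : (SimpleGraph.fromEdgeSet edges).IsAcyclic
  unique_root : ∀ v : V, ∃! r, r ∈ roots ∧ (SimpleGraph.fromEdgeSet edges).Reachable v r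

open Fin Function SimpleGraph


/-- no L followed by R -/
def NoLR {m : ℕ} (w : Fin m → Fin 3) : Prop :=
  ∀ i j : Fin m, (i : ℕ) + 1 = (j : ℕ) → ¬(w i = 1 ∧ w j = 2)

def GoodT {m : ℕ} (w : Fin (m+1) → Fin 3) : Prop := NoLR w ∧ w 0 ≠ 2
def GoodB {m : ℕ} (w : Fin (m+1) → Fin 3) : Prop := GoodT w ∧ w (Fin.last m) ≠ 1

instance {m : ℕ} (w : Fin m → Fin 3) : Decidable (NoLR w) := by unfold NoLR; infer_instance
instance {m : ℕ} (w : Fin (m+1) → Fin 3) : Decidable (GoodT w) := by unfold GoodT; infer_instance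
instance {m : ℕ} (w : Fin (m+1) → Fin 3) : Decidable (GoodB w) := by unfold GoodB; infer_instance

lemma noLR_snoc {m : ℕ} (w : Fin (m+1) → Fin 3) (x : Fin 3) :
    NoLR (snoc w x) ↔ NoLR w ∧ ¬(w (Fin.last m) = 1 ∧ x = 2) := by
  constructor
  · intro h
    refine ⟨fun i j hij hc => ?_, fun hc => ?_⟩
    · exact h i.castSucc j.castSucc (by simpa using hij) (by simpa using hc)
    · exact h (Fin.last m).castSucc (Fin.last (m+1)) (by simp) (by simpa using hc)
  · rintro ⟨h1, h2⟩ i j hij hc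
    rcases Fin.eq_castSucc_or_eq_last j with ⟨j', rfl⟩ | rfl
    · rcases Fin.eq_castSucc_or_eq_last i with ⟨i', rfl⟩ | rfl
      · exact h1 i' j' (by simpa using hij) (by simpa using hc)
      · simp only [Fin.val_last, Fin.coe_castSucc] at hij
        have := j'.isLt; omega
    · rcases Fin.eq_castSucc_or_eq_last i with ⟨i', rfl⟩ | rfl
      · have hv : (i' : ℕ) = m := by
          simp only [Fin.val_last, Fin.coe_castSucc] at hij; omega
        have : i' = Fin.last m := Fin.ext (by simp [hv])
        subst this
        exact h2 (by simpa using hc)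
      · simp only [Fin.val_last] at hij; omega

lemma goodT_snoc_zero {m : ℕ} (w : Fin (m+1) → Fin 3) : GoodT (snoc w 0) ↔ GoodT w := by
  have h0 : (Fin.snoc (α := fun _ => Fin 3) w 0) 0 = w 0 := by
    simp [Fin.snoc]
  unfold GoodT
  rw [noLR_snoc, h0]
  constructor
  · rintro ⟨⟨h1, _⟩, h2⟩; exact ⟨h1, h2⟩
  · rintro ⟨h1, h2⟩; exact ⟨⟨h1, by simp⟩, h2⟩

lemma goodT_snoc_one {m : ℕ} (w : Fin (m+1) → Fin 3) : GoodT (snoc w 1) ↔ GoodT w := by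
  have h0 : (Fin.snoc (α := fun _ => Fin 3) w 1) 0 = w 0 := by
    simp [Fin.snoc]
  unfold GoodT
  rw [noLR_snoc, h0]
  constructor
  · rintro ⟨⟨h1, _⟩, h2⟩; exact ⟨h1, h2⟩
  · rintro ⟨h1, h2⟩; exact ⟨⟨h1, by simp⟩, h2⟩

lemma goodT_snoc_two {m : ℕ} (w : Fin (m+1) → Fin 3) : GoodT (snoc w 2) ↔ GoodB w := by
  have h0 : (Fin.snoc (α := fun _ => Fin 3) w 2) 0 = w 0 := by
    simp [Fin.snoc]
  unfold GoodB GoodT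
  rw [noLR_snoc, h0]
  constructor
  · rintro ⟨⟨h1, h3⟩, h2⟩
    exact ⟨⟨h1, h2⟩, fun hl => h3 ⟨hl, rfl⟩⟩
  · rintro ⟨⟨h1, h2⟩, h3⟩
    exact ⟨⟨h1, fun hc => h3 hc.1⟩, h2⟩

lemma goodB_snoc_zero {m : ℕ} (w : Fin (m+1) → Fin 3) : GoodB (snoc w 0) ↔ GoodT w := by
  unfold GoodB
  rw [goodT_snoc_zero, snoc_last]
  simp

lemma goodB_snoc_one {m : ℕ} (w : Fin (m+1) → Fin 3) : GoodB (snoc w 1) ↔ False := by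
  unfold GoodB
  rw [snoc_last]
  simp

lemma goodB_snoc_two {m : ℕ} (w : Fin (m+1) → Fin 3) : GoodB (snoc w 2) ↔ GoodB w := by
  unfold GoodB
  rw [goodT_snoc_two, snoc_last]
  simp [GoodB]

lemma card_snoc_split {m : ℕ} (P : (Fin (m+2) → Fin 3) → Prop) [DecidablePred P] :
    Nat.card {w // P w} = ∑ x : Fin 3, Nat.card {w : Fin (m+1) → Fin 3 // P (snoc w x)} := by
  have e1 : {p : Fin 3 × (Fin (m+1) → Fin 3) // P (snoc p.2 p.1)} ≃ {w // P w} :=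
    Equiv.subtypeEquiv (Fin.snocEquiv (fun _ => Fin 3)) (fun p => Iff.rfl)
  have e2 : {p : Fin 3 × (Fin (m+1) → Fin 3) // P (snoc p.2 p.1)} ≃
      Σ x : Fin 3, {w : Fin (m+1) → Fin 3 // P (snoc w x)} :=
    Equiv.subtypeProdEquivSigmaSubtype (fun x w => P (snoc w x))
  rw [Nat.card_congr (e1.symm.trans e2)]
  rw [Nat.card_eq_fintype_card, Fintype.card_sigma]
  simp only [Nat.card_eq_fintype_card]

lemma card_false_zero {α : Type*} : Nat.card {_x : α // False} = 0 := by
  have : IsEmpty {_x : α // False} := ⟨fun x => x.2⟩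
  exact Nat.card_of_isEmpty

lemma count_words : ∀ m : ℕ,
    Nat.card {w : Fin (m+1) → Fin 3 // GoodB w} = Nat.fib (2*m+2) ∧
    Nat.card {w : Fin (m+1) → Fin 3 // GoodT w} = Nat.fib (2*m+3) := by
  intro m
  induction m with
  | zero =>
    constructor
    · rw [Nat.card_eq_fintype_card]; decide
    · rw [Nat.card_eq_fintype_card]; decide
  | succ k ih =>
    obtain ⟨ihB, ihT⟩ := ih
    have hB := card_snoc_split (m := k) (fun w => GoodB w)
    have hT := card_snoc_split (m := k) (fun w => GoodT w)
    rw [Fin.sum_univ_three] at hB hT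
    rw [Nat.card_congr (Equiv.subtypeEquivRight (fun w => goodB_snoc_zero w)),
        Nat.card_congr (Equiv.subtypeEquivRight (fun w => goodB_snoc_one w)),
        Nat.card_congr (Equiv.subtypeEquivRight (fun w => goodB_snoc_two w)),
        card_false_zero, ihB, ihT] at hB
    rw [Nat.card_congr (Equiv.subtypeEquivRight (fun w => goodT_snoc_zero w)),
        Nat.card_congr (Equiv.subtypeEquivRight (fun w => goodT_snoc_one w)),
        Nat.card_congr (Equiv.subtypeEquivRight (fun w => goodT_snoc_two w)),
        ihB, ihT] at hT
    have h1 : Nat.fib ((2*k+2)+2) = Nat.fib (2*k+2) + Nat.fib (2*k+2+1) := Nat.fib_add_two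
    have h2 : Nat.fib ((2*k+3)+2) = Nat.fib (2*k+3) + Nat.fib (2*k+3+1) := Nat.fib_add_two
    have h3 : Nat.fib (2*k+2+1) = Nat.fib (2*k+3) := congrArg Nat.fib (by omega)
    have h5 : Nat.fib (2*k+3+1) = Nat.fib ((2*k+2)+2) := congrArg Nat.fib (by omega)
    constructor
    · rw [hB, show 2*(k+1)+2 = (2*k+2)+2 by ring]
      omega
    · rw [hT, show 2*(k+1)+3 = (2*k+3)+2 by ring]
      omega


section PathSub

variable {m : ℕ}

lemma fin_mk_eq {n : ℕ} {a : Fin n} {k : ℕ} (hk : k < n) (h : a.val = k) :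
    a = ⟨k, hk⟩ := Fin.ext (by simpa using h)

lemma adj_cut_step {E : Set (Sym2 (Fin (m+2)))} (hE : E ⊆ (pathGraph (m+2)).edgeSet)
    {k : ℕ} (hk : k + 1 < m+2)
    (hke : s(⟨k, by omega⟩, ⟨k+1, hk⟩) ∉ E) {a b : Fin (m+2)}
    (hab : (fromEdgeSet E).Adj a b) : (a.val ≤ k ↔ b.val ≤ k) := by
  rw [fromEdgeSet_adj] at hab
  obtain ⟨hmem, hne⟩ := hab
  have hadj : (pathGraph (m+2)).Adj a b := (pathGraph (m+2)).mem_edgeSet.mp (hE hmem)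
  rw [pathGraph_adj] at hadj
  by_cases hak : a.val ≤ k <;> by_cases hbk : b.val ≤ k
  · simp [hak, hbk]
  · exfalso
    have ha : a = (⟨k, by omega⟩ : Fin (m+2)) := fin_mk_eq _ (by omega)
    have hb : b = (⟨k+1, hk⟩ : Fin (m+2)) := fin_mk_eq _ (by omega)
    rw [ha, hb] at hmem
    exact hke hmem
  · exfalso
    have ha : a = (⟨k+1, hk⟩ : Fin (m+2)) := fin_mk_eq _ (by omega)
    have hb : b = (⟨k, by omega⟩ : Fin (m+2)) := fin_mk_eq _ (by omega)
    rw [ha, hb, Sym2.eq_swap] at hmem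
    exact hke hmem
  · simp [hak, hbk]

lemma cut_lemma {E : Set (Sym2 (Fin (m+2)))} (hE : E ⊆ (pathGraph (m+2)).edgeSet)
    {k : ℕ} (hk : k + 1 < m+2)
    (hke : s(⟨k, by omega⟩, ⟨k+1, hk⟩) ∉ E) {u v : Fin (m+2)}
    (h : (fromEdgeSet E).Reachable u v) : (u.val ≤ k ↔ v.val ≤ k) := by
  obtain ⟨p⟩ := h
  induction p with
  | nil => rfl
  | cons ha _ ih => exact (adj_cut_step hE hk hke ha).trans ih

lemma edge_mem_of_reach {E : Set (Sym2 (Fin (m+2)))} (hE : E ⊆ (pathGraph (m+2)).edgeSet)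
    {u v : Fin (m+2)} (h : (fromEdgeSet E).Reachable u v) {k : ℕ} (hk : k + 1 < m+2)
    (h1 : u.val ≤ k) (h2 : k < v.val) : s(⟨k, by omega⟩, ⟨k+1, hk⟩) ∈ E := by
  by_contra hke
  have := cut_lemma hE hk hke h
  omega

lemma reach_of_interval {E : Set (Sym2 (Fin (m+2)))} {u v : Fin (m+2)} (huv : u.val ≤ v.val)
    (h : ∀ k : ℕ, (hk : k + 1 < m+2) → u.val ≤ k → k < v.val →
      s(⟨k, by omega⟩, ⟨k+1, hk⟩) ∈ E) :
    (fromEdgeSet E).Reachable u v := by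
  obtain ⟨d, hd⟩ : ∃ d, v.val - u.val = d := ⟨_, rfl⟩
  induction d generalizing u with
  | zero =>
    have : u = v := Fin.ext (by omega)
    rw [this]
  | succ d ih =>
    have hu1 : u.val + 1 < m + 2 := by have := v.isLt; omega
    have hmem : s(⟨u.val, by omega⟩, ⟨u.val+1, hu1⟩) ∈ E :=
      h u.val hu1 le_rfl (by omega)
    have hadj : (fromEdgeSet E).Adj u ⟨u.val+1, hu1⟩ := by
      rw [fromEdgeSet_adj]
      constructor
      · exact hmem
      · intro hc
        have := congrArg Fin.val hc
        simp at this
    refine hadj.reachable.trans (ih (u := ⟨u.val+1, hu1⟩) (by simpa using by omega) ?_ (by simp; omega))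
    intro k hk hk1 hk2
    exact h k hk (by simp at hk1; omega) hk2

lemma acyclic_sub_path {E : Set (Sym2 (Fin (m+2)))} (hE : E ⊆ (pathGraph (m+2)).edgeSet) :
    (fromEdgeSet E).IsAcyclic := by
  rw [isAcyclic_iff_forall_adj_isBridge]
  intro a b hab
  have hab' := hab
  rw [fromEdgeSet_adj] at hab'
  obtain ⟨hmem, hne⟩ := hab'
  have hadj : (pathGraph (m+2)).Adj a b := (pathGraph (m+2)).mem_edgeSet.mp (hE hmem)
  rw [pathGraph_adj] at hadj
  rw [isBridge_iff]
  intro hreach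
  have hsd : fromEdgeSet E \ fromEdgeSet {s(a, b)} = fromEdgeSet (E \ {s(a, b)}) :=
    (fromEdgeSet_sdiff E {s(a, b)}).symm
  rw [deleteEdges, hsd] at hreach
  have hE' : E \ {s(a, b)} ⊆ (pathGraph (m+2)).edgeSet := fun e he => hE he.1
  rcases hadj with h1 | h1
  · have hk : a.val + 1 < m + 2 := by have := b.isLt; omega
    have hke : s(⟨a.val, by omega⟩, ⟨a.val+1, hk⟩) ∉ E \ {s(a, b)} := by
      intro hcon
      apply hcon.2
      have hb : b = (⟨a.val+1, hk⟩ : Fin (m+2)) := fin_mk_eq _ (by omega)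
      have ha : a = (⟨a.val, by omega⟩ : Fin (m+2)) := fin_mk_eq _ rfl
      rw [← ha, ← hb]
      rfl
    have := cut_lemma hE' hk hke hreach
    omega
  · have hk : b.val + 1 < m + 2 := by have := a.isLt; omega
    have hke : s(⟨b.val, by omega⟩, ⟨b.val+1, hk⟩) ∉ E \ {s(a, b)} := by
      intro hcon
      apply hcon.2
      have ha : a = (⟨b.val+1, hk⟩ : Fin (m+2)) := fin_mk_eq _ (by omega)
      have hb : b = (⟨b.val, by omega⟩ : Fin (m+2)) := fin_mk_eq _ rfl
      rw [← ha, ← hb, Sym2.eq_swap]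
      rfl
    have := cut_lemma hE' hk hke hreach
    omega

end PathSub

section Words

variable {m : ℕ}

def eEdge (i : Fin (m+1)) : Sym2 (Fin (m+2)) :=
  s(⟨i.val, by omega⟩, ⟨i.val+1, by have := i.isLt; omega⟩)

def ESet (w : Fin (m+1) → Fin 3) : Set (Sym2 (Fin (m+2))) :=
  {a | ∃ i, w i ≠ 0 ∧ a = eEdge i}

def WExt (w : Fin (m+1) → Fin 3) : ℕ → Fin 3 :=
  fun k => if h : k < m+1 then w ⟨k, h⟩ else 0

lemma fin3_cases (x : Fin 3) : x = 0 ∨ x = 1 ∨ x = 2 := by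
  fin_cases x <;> simp

lemma WExt_lt {w : Fin (m+1) → Fin 3} {k : ℕ} (h : WExt w k ≠ 0) : k < m + 1 := by
  by_contra hc
  simp [WExt, hc] at h

lemma WExt_eq {w : Fin (m+1) → Fin 3} {k : ℕ} (h : k < m+1) : WExt w k = w ⟨k, h⟩ := by
  simp [WExt, h]

lemma noLR_WExt {w : Fin (m+1) → Fin 3} (hw : GoodB w) (k : ℕ) :
    ¬(WExt w k = 1 ∧ WExt w (k+1) = 2) := by
  rintro ⟨h1, h2⟩
  have hk1 : k + 1 < m + 1 := WExt_lt (by rw [h2]; decide)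
  have hk : k < m + 1 := by omega
  rw [WExt_eq hk] at h1
  rw [WExt_eq hk1] at h2
  exact hw.1.1 ⟨k, hk⟩ ⟨k+1, hk1⟩ rfl ⟨h1, h2⟩

lemma first_WExt {w : Fin (m+1) → Fin 3} (hw : GoodB w) : WExt w 0 ≠ 2 := by
  rw [WExt_eq (by omega)]
  exact hw.1.2

lemma last_WExt {w : Fin (m+1) → Fin 3} (hw : GoodB w) : WExt w m ≠ 1 := by
  rw [WExt_eq (by omega)]
  exact hw.2

lemma ESet_sub (w : Fin (m+1) → Fin 3) : ESet w ⊆ (pathGraph (m+2)).edgeSet := by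
  rintro a ⟨i, hi, rfl⟩
  rw [eEdge, SimpleGraph.mem_edgeSet, pathGraph_adj]
  left; rfl

lemma mem_ESet_iff (w : Fin (m+1) → Fin 3) {k : ℕ} (hk : k+1 < m+2) :
    s(⟨k, by omega⟩, ⟨k+1, hk⟩) ∈ ESet w ↔ WExt w k ≠ 0 := by
  constructor
  · rintro ⟨i, hi, he⟩
    rw [eEdge, Sym2.eq_iff] at he
    have hki : k = i.val := by
      rcases he with ⟨h1, h2⟩ | ⟨h1, h2⟩
      · exact congrArg Fin.val h1
      · have := congrArg Fin.val h1
        have := congrArg Fin.val h2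
        simp at *
        omega
    rw [hki, WExt_eq i.isLt]
    have : (⟨i.val, i.isLt⟩ : Fin (m+1)) = i := Fin.ext rfl
    rw [this]
    exact hi
  · intro h
    have hk1 : k < m + 1 := WExt_lt h
    refine ⟨⟨k, hk1⟩, ?_, rfl⟩
    rw [WExt_eq hk1] at h
    exact h

def hasRO (w : Fin (m+1) → Fin 3) (v : Fin (m+2)) : Prop := WExt w v.val = 2
def hasLO (w : Fin (m+1) → Fin 3) (v : Fin (m+2)) : Prop :=
  v.val ≠ 0 ∧ WExt w (v.val - 1) = 1

def RSet (w : Fin (m+1) → Fin 3) : Set (Fin (m+2)) :=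
  {v | ¬ hasRO w v ∧ ¬ hasLO w v}

lemma roots_unique {w : Fin (m+1) → Fin 3} (hw : GoodB w) {r₁ r₂ : Fin (m+2)}
    (h1 : r₁ ∈ RSet w) (h2 : r₂ ∈ RSet w)
    (hr : (fromEdgeSet (ESet w)).Reachable r₁ r₂) : r₁ = r₂ := by
  -- aux for ordered case
  have aux : ∀ a b : Fin (m+2), a ∈ RSet w → b ∈ RSet w →
      (fromEdgeSet (ESet w)).Reachable a b → a.val ≤ b.val → a = b := by
    intro a b ha hb hab hle
    rcases Nat.eq_or_lt_of_le hle with heq | hlt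
    · exact Fin.ext heq
    exfalso
    have key : ∀ d k, k + 1 + d = b.val → a.val ≤ k → WExt w k = 2 := by
      intro d
      induction d with
      | zero =>
        intro k hk hk1
        have hkm : k + 1 < m + 2 := by have := b.isLt; omega
        have hmem : s(⟨k, by omega⟩, ⟨k+1, hkm⟩) ∈ ESet w :=
          edge_mem_of_reach (ESet_sub w) hab hkm hk1 (by omega)
        have hne : WExt w k ≠ 0 := (mem_ESet_iff w hkm).mp hmem
        have hne1 : WExt w k ≠ 1 := by
          intro hc
          exact hb.2 ⟨by omega, by rw [show b.val - 1 = k by omega]; exact hc⟩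
        rcases fin3_cases (WExt w k) with h | h | h <;> simp_all
      | succ d ih =>
        intro k hk hk1
        have h2' : WExt w (k+1) = 2 := ih (k+1) (by omega) (by omega)
        have hkm : k + 1 < m + 2 := by have := b.isLt; omega
        have hmem : s(⟨k, by omega⟩, ⟨k+1, hkm⟩) ∈ ESet w :=
          edge_mem_of_reach (ESet_sub w) hab hkm hk1 (by omega)
        have hne : WExt w k ≠ 0 := (mem_ESet_iff w hkm).mp hmem
        have hne1 : WExt w k ≠ 1 := by
          intro hc
          exact noLR_WExt hw k ⟨hc, h2'⟩
        rcases fin3_cases (WExt w k) with h | h | h <;> simp_all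
    have : WExt w a.val = 2 := key (b.val - a.val - 1) a.val (by omega) le_rfl
    exact ha.1 this
  rcases Nat.le_total r₁.val r₂.val with h | h
  · exact aux r₁ r₂ h1 h2 hr h
  · exact (aux r₂ r₁ h2 h1 hr.symm h).symm

lemma root_exists {w : Fin (m+1) → Fin 3} (hw : GoodB w) (v : Fin (m+2)) :
    ∃ r, r ∈ RSet w ∧ (fromEdgeSet (ESet w)).Reachable v r := by
  by_cases hR : hasRO w v
  · -- walk right
    have hex : ∃ j, v.val ≤ j ∧ WExt w j ≠ 2 :=
      ⟨m+1, by omega, by simp [WExt]⟩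
    set r := Nat.find hex with hrdef
    obtain ⟨hvr, hr2⟩ := Nat.find_spec hex
    have hrle : r ≤ m + 1 := Nat.find_le ⟨by omega, by simp [WExt]⟩
    have run : ∀ j, v.val ≤ j → j < r → WExt w j = 2 := by
      intro j hj1 hj2
      have := Nat.find_min hex hj2
      push_neg at this
      exact this hj1
    have hvlt : v.val < r := by
      rcases Nat.eq_or_lt_of_le hvr with heq | h
      · exact absurd (heq ▸ hR) hr2
      · exact h
    refine ⟨⟨r, by omega⟩, ⟨?_, ?_⟩, ?_⟩
    · exact hr2
    · rintro ⟨hne, hc⟩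
      have : WExt w (r - 1) = 2 := run (r-1) (by omega) (by omega)
      rw [this] at hc
      exact absurd hc (by decide)
    · refine reach_of_interval (by simpa using by omega) ?_
      intro k hk hk1 hk2
      rw [mem_ESet_iff w hk]
      have : WExt w k = 2 := run k hk1 (by simpa using hk2)
      rw [this]
      decide
  · by_cases hL : hasLO w v
    · -- walk left
      obtain ⟨hv0, hv1⟩ := hL
      have hex : ∃ d, ¬(d < v.val ∧ WExt w (v.val - d - 1) = 1) :=
        ⟨v.val, by simp⟩
      set d := Nat.find hex with hddef
      have hspec := Nat.find_spec hex
      rw [← hddef] at hspec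
      have hd1 : 1 ≤ d := by
        rcases Nat.eq_zero_or_pos d with h0 | h0
        · exfalso; apply hspec; rw [h0]; exact ⟨by omega, by simpa using hv1⟩
        · exact h0
      have hdv : d ≤ v.val := Nat.find_le (by simp)
      have run : ∀ d', d' < d → WExt w (v.val - d' - 1) = 1 := by
        intro d' hd'
        have := Nat.find_min hex hd'
        push_neg at this
        exact this.2
      set l := v.val - d with hldef
      have run' : ∀ k, l ≤ k → k < v.val → WExt w k = 1 := by
        intro k hk1 hk2
        have := run (v.val - k - 1) (by omega)
        rw [show v.val - (v.val - k - 1) - 1 = k by omega] at this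
        exact this
      refine ⟨⟨l, by have := v.isLt; omega⟩, ⟨?_, ?_⟩, ?_⟩
      · intro hc
        have : WExt w l = 1 := run' l le_rfl (by omega)
        rw [hasRO] at hc
        simp only at hc
        rw [this] at hc
        exact absurd hc (by decide)
      · rintro ⟨hne, hc⟩
        simp only at hne hc
        apply hspec
        refine ⟨by omega, ?_⟩
        rw [show v.val - d - 1 = l - 1 by omega]
        exact hc
      · refine (reach_of_interval (u := (⟨l, by have := v.isLt; omega⟩ : Fin (m+2)))
          (v := v) (by simpa using by omega) ?_).symm
        intro k hk hk1 hk2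
        rw [mem_ESet_iff w hk]
        have : WExt w k = 1 := run' k (by simpa using hk1) hk2
        rw [this]
        decide
    · exact ⟨v, ⟨hR, hL⟩, Reachable.refl v⟩

lemma unique_root_holds {w : Fin (m+1) → Fin 3} (hw : GoodB w) (v : Fin (m+2)) :
    ∃! r, r ∈ RSet w ∧ (fromEdgeSet (ESet w)).Reachable v r := by
  obtain ⟨r, hr, hvr⟩ := root_exists hw v
  refine ⟨r, ⟨hr, hvr⟩, ?_⟩
  rintro y ⟨hy, hvy⟩
  exact roots_unique hw hy hr (hvy.symm.trans hvr)

end Words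

section Forest

variable {m : ℕ}

lemma RootedForest.ext' {V : Type*} {G : SimpleGraph V} {F₁ F₂ : RootedForest G}
    (h1 : F₁.edges = F₂.edges) (h2 : F₁.roots = F₂.roots) : F₁ = F₂ := by
  cases F₁; cases F₂
  simp only at h1 h2
  subst h1; subst h2
  rfl

def mkForest (w : Fin (m+1) → Fin 3) (hw : GoodB w) : RootedForest (pathGraph (m+2)) where
  edges := ESet w
  roots := RSet w
  edges_sub := ESet_sub w
  acyclic := acyclic_sub_path (ESet_sub w)
  unique_root := unique_root_holds hw

lemma zero_mem_RSet {w : Fin (m+1) → Fin 3} (hw : GoodB w) :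
    (⟨0, by omega⟩ : Fin (m+2)) ∈ RSet w := by
  refine ⟨?_, ?_⟩
  · exact first_WExt hw
  · rintro ⟨hne, -⟩
    exact hne rfl

lemma last_mem_RSet {w : Fin (m+1) → Fin 3} (hw : GoodB w) :
    (⟨m+1, by omega⟩ : Fin (m+2)) ∈ RSet w := by
  refine ⟨?_, ?_⟩
  · intro hc
    rw [hasRO] at hc
    simp only [WExt] at hc
    rw [dif_neg (by omega)] at hc
    exact absurd hc (by decide)
  · rintro ⟨-, hc⟩
    simp only at hc
    rw [show m + 1 - 1 = m by omega] at hc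
    exact last_WExt hw hc

def Phi (m : ℕ) : {w : Fin (m+1) → Fin 3 // GoodB w} →
    {F : RootedForest (pathGraph (m+2)) //
      (⟨0, by omega⟩ : Fin (m+2)) ∈ F.roots ∧ (⟨m+1, by omega⟩ : Fin (m+2)) ∈ F.roots} :=
  fun ⟨w, hw⟩ => ⟨mkForest w hw, zero_mem_RSet hw, last_mem_RSet hw⟩

lemma key_21 {w w' : Fin (m+1) → Fin 3} (hw : GoodB w) (hw' : GoodB w')
    (hsupp : ∀ k : ℕ, WExt w k = 0 ↔ WExt w' k = 0)
    (hroots : RSet w = RSet w') :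
    ∀ j : ℕ, ¬(WExt w j = 2 ∧ WExt w' j = 1) := by
  intro j
  induction j using Nat.strong_induction_on with
  | _ j ih =>
    rintro ⟨h2, h1⟩
    have hj : j < m + 1 := WExt_lt (by rw [h2]; decide)
    set v : Fin (m+2) := ⟨j, by omega⟩ with hv
    have hvR : v ∉ RSet w := by
      intro hc
      exact hc.1 h2
    rw [hroots] at hvR
    have : hasRO w' v ∨ hasLO w' v := by
      by_contra hc
      push_neg at hc
      exact hvR ⟨hc.1, hc.2⟩
    rcases this with hc | hc
    · rw [hasRO] at hc
      simp only [hv] at hc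
      rw [h1] at hc
      exact absurd hc (by decide)
    · obtain ⟨hne, hc1⟩ := hc
      simp only [hv] at hne hc1
      have hjpos : 0 < j := by omega
      have hc1' : WExt w' (j-1) = 1 := hc1
      have hne0 : WExt w (j-1) ≠ 0 := by
        intro h0
        have h3 := (hsupp (j-1)).mp h0
        rw [h3] at hc1'
        exact absurd hc1' (by decide)
      have : WExt w (j-1) = 2 := by
        rcases fin3_cases (WExt w (j-1)) with h | h | h
        · exact absurd h hne0
        · exfalso
          apply noLR_WExt hw (j-1)
          rw [show j - 1 + 1 = j by omega]
          exact ⟨h, h2⟩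
        · exact h
      exact ih (j-1) (by omega) ⟨this, hc1'⟩

lemma Phi_inj (m : ℕ) : Function.Injective (Phi m) := by
  rintro ⟨w, hw⟩ ⟨w', hw'⟩ h
  have hE : ESet w = ESet w' := congrArg (fun F => F.val.edges) h
  have hR : RSet w = RSet w' := congrArg (fun F => F.val.roots) h
  have hsupp : ∀ k : ℕ, WExt w k = 0 ↔ WExt w' k = 0 := by
    intro k
    by_cases hk : k < m + 1
    · have hk2 : k + 1 < m + 2 := by omega
      have hiff : (WExt w k ≠ 0) ↔ (WExt w' k ≠ 0) :=
        (mem_ESet_iff w hk2).symm.trans (hE ▸ mem_ESet_iff w' hk2)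
      constructor
      · intro h0
        by_contra hc
        exact (hiff.mpr hc) h0
      · intro h0
        by_contra hc
        exact (hiff.mp hc) h0
    · simp [WExt, hk]
  have hsupp' : ∀ k : ℕ, WExt w' k = 0 ↔ WExt w k = 0 := fun k => (hsupp k).symm
  have k1 := key_21 hw hw' hsupp hR
  have k2 := key_21 hw' hw hsupp' hR.symm
  apply Subtype.ext
  funext i
  show w i = w' i
  have hi : (i : ℕ) < m + 1 := i.isLt
  have e1 : WExt w i = w i := by rw [WExt_eq hi]
  have e2 : WExt w' i = w' i := by rw [WExt_eq hi]
  have heq : WExt w (i : ℕ) = WExt w' (i : ℕ) := by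
    rcases fin3_cases (WExt w (i : ℕ)) with h | h | h <;>
      rcases fin3_cases (WExt w' (i : ℕ)) with h' | h' | h'
    · rw [h, h']
    · exfalso; have := (hsupp i).mp h; rw [h'] at this; exact absurd this (by decide)
    · exfalso; have := (hsupp i).mp h; rw [h'] at this; exact absurd this (by decide)
    · exfalso; have := (hsupp i).mpr h'; rw [h] at this; exact absurd this (by decide)
    · rw [h, h']
    · exfalso; exact k2 i ⟨h', h⟩
    · exfalso; have := (hsupp i).mpr h'; rw [h] at this; exact absurd this (by decide)
    · exfalso; exact k1 i ⟨h, h'⟩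
    · rw [h, h']
  rw [← e1, ← e2]
  exact heq

end Forest

section Surj

variable {m : ℕ}


lemma path_edge_form {e : Sym2 (Fin (m+2))} :
    e ∈ (pathGraph (m+2)).edgeSet → ∃ i : Fin (m+1), e = eEdge i := by
  refine Sym2.ind (fun u v he => ?_) e
  rw [SimpleGraph.mem_edgeSet, pathGraph_adj] at he
  rcases he with h | h
  · have hb : u.val < m+1 := by have := v.isLt; omega
    refine ⟨⟨u.val, hb⟩, ?_⟩
    have hv : v = (⟨u.val + 1, by omega⟩ : Fin (m+2)) := fin_mk_eq _ (by omega)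
    rw [hv]
    rfl
  · have hb : v.val < m+1 := by have := u.isLt; omega
    refine ⟨⟨v.val, hb⟩, ?_⟩
    have hu : u = (⟨v.val + 1, by omega⟩ : Fin (m+2)) := fin_mk_eq _ (by omega)
    rw [hu, Sym2.eq_swap]
    rfl

lemma Phi_surj (m : ℕ) : Function.Surjective (Phi m) := by
  rintro ⟨F, hF0, hFl⟩
  classical
  have ur := F.unique_root
  set rootOf : Fin (m+2) → Fin (m+2) := fun v => (ur v).exists.choose with hrootOf
  have rootSpec : ∀ v, rootOf v ∈ F.roots ∧ (fromEdgeSet F.edges).Reachable v (rootOf v) :=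
    fun v => (ur v).exists.choose_spec
  have rootUniq : ∀ v r, r ∈ F.roots → (fromEdgeSet F.edges).Reachable v r → r = rootOf v := by
    intro v r h1 h2
    obtain ⟨r₀, h₀, hu⟩ := ur v
    rw [hu r ⟨h1, h2⟩, hu (rootOf v) (rootSpec v)]
  have rootCongr : ∀ u v, (fromEdgeSet F.edges).Reachable u v → rootOf u = rootOf v := by
    intro u v h
    exact (rootUniq u (rootOf v) (rootSpec v).1 (h.trans (rootSpec v).2)).symm
  set rootV : ℕ → ℕ := fun k => if h : k < m+2 then (rootOf ⟨k, h⟩).val else 0 with hrootV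
  have rootV_eq : ∀ (k : ℕ) (h : k < m+2), rootV k = (rootOf ⟨k, h⟩).val := by
    intro k h
    simp only [rootV]
    rw [dif_pos h]
  have rootV_lt : ∀ k, k < m+2 → rootV k < m+2 := by
    intro k h
    rw [rootV_eq k h]
    exact (rootOf _).isLt
  have rootMem : ∀ v : Fin (m+2), v ∈ F.roots → rootV v.val = v.val := by
    intro v hv
    rw [rootV_eq v.val v.isLt, Fin.eta]
    exact congrArg Fin.val (rootUniq v v hv (Reachable.refl _)).symm
  set w : Fin (m+1) → Fin 3 := fun i =>
    if eEdge i ∈ F.edges then (if rootV i.val ≤ i.val then 1 else 2) else 0 with hwdef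
  have hw1 : ∀ i : Fin (m+1), w i = 1 ↔ (eEdge i ∈ F.edges ∧ rootV i.val ≤ i.val) := by
    intro i
    by_cases h : eEdge i ∈ F.edges
    · by_cases h2 : rootV i.val ≤ i.val
      · simp [w, h, h2]
      · simp [w, h, h2]
    · simp [w, h]
  have hw2 : ∀ i : Fin (m+1), w i = 2 ↔ (eEdge i ∈ F.edges ∧ i.val < rootV i.val) := by
    intro i
    by_cases h : eEdge i ∈ F.edges
    · by_cases h2 : rootV i.val ≤ i.val
      · simp [w, h, h2] <;> omega
      · simp [w, h, h2] <;> omega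
    · simp [w, h] <;> omega
  have hw0 : ∀ i : Fin (m+1), w i ≠ 0 ↔ eEdge i ∈ F.edges := by
    intro i
    by_cases h : eEdge i ∈ F.edges
    · by_cases h2 : rootV i.val ≤ i.val
      · simp [w, h, h2]
      · simp [w, h, h2]
    · simp [w, h]
  have adjE : ∀ i : Fin (m+1), eEdge i ∈ F.edges →
      (fromEdgeSet F.edges).Adj ⟨i.val, by omega⟩ ⟨i.val+1, by have := i.isLt; omega⟩ := by
    intro i h
    rw [fromEdgeSet_adj]
    refine ⟨h, ?_⟩
    intro hc
    have := congrArg Fin.val hc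
    simp at this
  have rootStepV : ∀ i : Fin (m+1), eEdge i ∈ F.edges → rootV i.val = rootV (i.val + 1) := by
    intro i h
    rw [rootV_eq i.val (by omega), rootV_eq (i.val+1) (by have := i.isLt; omega)]
    exact congrArg Fin.val (rootCongr _ _ (adjE i h).reachable)
  -- GoodB w
  have hGB : GoodB w := by
    refine ⟨⟨?_, ?_⟩, ?_⟩
    · -- NoLR
      rintro i j hij ⟨h1, h2⟩
      rw [hw1] at h1
      rw [hw2] at h2
      have hstep := rootStepV i h1.1
      rw [hij] at hstep
      have ha : rootV (i : ℕ) ≤ (i : ℕ) := h1.2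
      have hb : (j : ℕ) < rootV (j : ℕ) := h2.2
      omega
    · -- first letter
      intro hc
      rw [hw2] at hc
      have hb : (0 : ℕ) < rootV 0 := hc.2
      have h0 : rootV 0 = 0 := by
        have := rootMem ⟨0, by omega⟩ hF0
        exact this
      omega
    · -- last letter
      intro hc
      rw [hw1] at hc
      have hstep := rootStepV (Fin.last m) hc.1
      have hb : rootV m ≤ m := hc.2
      have hstep' : rootV m = rootV (m+1) := hstep
      have h0 : rootV (m+1) = m+1 := by
        have := rootMem ⟨m+1, by omega⟩ hFl
        exact this
      omega
  -- edges agree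
  have hE : ESet w = F.edges := by
    apply Set.eq_of_subset_of_subset
    · rintro a ⟨i, hi, rfl⟩
      exact (hw0 i).mp hi
    · intro e he
      obtain ⟨i, rfl⟩ := path_edge_form (F.edges_sub he)
      exact ⟨i, (hw0 i).mpr he, rfl⟩
  -- roots agree
  have hR : RSet w = F.roots := by
    apply Set.eq_of_subset_of_subset
    · -- RSet ⊆ F.roots
      intro v hv
      have hspec := rootSpec v
      have hrv : rootV v.val = (rootOf v).val := by
        rw [rootV_eq v.val v.isLt, Fin.eta]
      rcases lt_trichotomy v.val (rootOf v).val with hlt | heq | hgt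
      · exfalso
        have hkm : v.val + 1 < m + 2 := by have := (rootOf v).isLt; omega
        have hmem := edge_mem_of_reach F.edges_sub hspec.2 hkm le_rfl hlt
        have him : v.val < m + 1 := by omega
        have hmem' : eEdge ⟨v.val, him⟩ ∈ F.edges := hmem
        have hlt' : v.val < rootV v.val := by
          have hrv2 : rootV v.val = (rootOf v).val := hrv
          omega
        have hwv : w ⟨v.val, him⟩ = 2 := by
          rw [hw2]
          exact ⟨hmem', hlt'⟩
        apply hv.1
        show WExt w v.val = 2
        rw [WExt_eq him]
        exact hwv
      · exact (Fin.ext heq : v = rootOf v) ▸ hspec.1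
      · exfalso
        have hv0 : v.val ≠ 0 := by omega
        have him : v.val - 1 < m + 1 := by have := v.isLt; omega
        have hkm : (v.val - 1) + 1 < m + 2 := by have := v.isLt; omega
        have hmem := edge_mem_of_reach F.edges_sub hspec.2.symm hkm (by omega) (by omega)
        have hmem' : eEdge ⟨v.val - 1, him⟩ ∈ F.edges := hmem
        have hstep : rootV (v.val - 1) = rootV (v.val - 1 + 1) := rootStepV ⟨v.val - 1, him⟩ hmem'
        rw [show v.val - 1 + 1 = v.val by omega] at hstep
        have hle' : rootV (v.val - 1) ≤ v.val - 1 := by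
          have hrv2 : rootV v.val = (rootOf v).val := hrv
          omega
        have hwv : w ⟨v.val - 1, him⟩ = 1 := by
          rw [hw1]
          exact ⟨hmem', hle'⟩
        apply hv.2
        refine ⟨hv0, ?_⟩
        show WExt w (v.val - 1) = 1
        rw [WExt_eq him]
        exact hwv
    · -- F.roots ⊆ RSet
      intro v hv
      have hvv : rootV v.val = v.val := rootMem v hv
      constructor
      · intro hc
        rw [hasRO] at hc
        have him : v.val < m + 1 := WExt_lt (by rw [hc]; decide)
        rw [WExt_eq him] at hc
        rw [hw2] at hc
        have : v.val < rootV v.val := hc.2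
        omega
      · rintro ⟨hv0, hc⟩
        have him : v.val - 1 < m + 1 := by have := v.isLt; omega
        have hc' : WExt w (v.val - 1) = 1 := hc
        rw [WExt_eq him] at hc'
        rw [hw1] at hc'
        have hle : rootV (v.val - 1) ≤ v.val - 1 := hc'.2
        have hstep : rootV (v.val - 1) = rootV (v.val - 1 + 1) :=
          rootStepV ⟨v.val - 1, him⟩ hc'.1
        rw [show v.val - 1 + 1 = v.val by omega] at hstep
        have hne : (v.val : ℕ) ≠ 0 := hv0
        omega
  refine ⟨⟨w, hGB⟩, ?_⟩
  apply Subtype.ext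
  exact RootedForest.ext' hE hR

end Surj


lemma main_count (m : ℕ) :
    Nat.card {F : RootedForest (pathGraph (m+2)) //
      (⟨0, by omega⟩ : Fin (m+2)) ∈ F.roots ∧ (⟨m+1, by omega⟩ : Fin (m+2)) ∈ F.roots} =
    Nat.fib (2*m+2) := by
  rw [← Nat.card_eq_of_bijective (Phi m) ⟨Phi_inj m, Phi_surj m⟩]
  exact (count_words m).1

theorem path_forest_count_both_ends_roots (n : ℕ) (hn : 2 ≤ n) :
    Nat.card {F : RootedForest (SimpleGraph.pathGraph n) //
        (⟨0, by omega⟩ : Fin n) ∈ F.roots ∧ (⟨n - 1, by omega⟩ : Fin n) ∈ F.roots} =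
      Nat.fib (2 * (n - 1)) := by
  obtain ⟨m, rfl⟩ : ∃ m, n = m + 2 := ⟨n - 2, by omega⟩
  rw [show 2 * (m + 2 - 1) = 2 * m + 2 by omega]
  exact main_count m
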